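/- For the macroscopic coupling rates c_N and the coverage observable partitioned into classes k ∈ {1,2,3} (increment negative, zero, positive), the goal-oriented functional evaluates to F[c_N; f] = ∑_{k∈{1,3}} min(λ^A_k(σ), λ^B_k(η)). -/

import Mathlib

open Finset

lemma key_norm_sum {α : Type*} [Fintype α] [DecidableEq α] (c : α → ℝ)
    (hc : ∀ p, 0 ≤ c p) (S : Finset α) (ε : ℝ) (d : α → ℝ)
    (hd : ∀ p ∈ S, d p = ε) :
    ∑ p : α, c p / (∑ p' ∈ S, c p') * (if p ∈ S then 1 else 0) * d p
      = if (∑ p' ∈ S, c p') = 0 then 0 else ε := by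
  classical
  rw [← Finset.sum_subset (Finset.subset_univ S) (by intro p _ hp; simp [hp])]
  by_cases h : (∑ p' ∈ S, c p') = 0
  · rw [if_pos h]
    apply Finset.sum_eq_zero
    intro p hp
    have hcp : c p = 0 :=
      (Finset.sum_eq_zero_iff_of_nonneg (fun p _ => hc p)).mp h p hp
    simp [hcp]
  · rw [if_neg h]
    calc ∑ p ∈ S, c p / (∑ p' ∈ S, c p') * (if p ∈ S then 1 else 0) * d p
        = ∑ p ∈ S, c p / (∑ p' ∈ S, c p') * ε := by
          refine Finset.sum_congr rfl fun p hp => ?_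
          rw [if_pos hp, hd p hp]; ring
      _ = (∑ p ∈ S, c p) / (∑ p' ∈ S, c p') * ε := by
          rw [← Finset.sum_mul, ← Finset.sum_div]
      _ = ε := by rw [div_self h, one_mul]

lemma min_if_fix (a b s t : ℝ) (ha : 0 ≤ a) (hb : 0 ≤ b) :
    min a b * (if a = 0 then 0 else s) * (if b = 0 then 0 else t)
      = min a b * (s * t) := by
  by_cases h1 : a = 0
  · simp [h1, min_eq_left hb]
  by_cases h2 : b = 0
  · simp [h2, min_eq_right ha]
  · simp [h1, h2]; ring

/-- For the macroscopic coupling rates `c_N` and the coverage observable with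
transitions classified by the sign of the (normalized) observable increment
(class 0: increment −1, class 1: increment 0, class 2: increment +1), the
goal-oriented functional evaluates to
`F[c_N; f] = ∑_{k ∈ {negative, positive}} min(λ^A_k, λ^B_k)`. -/
theorem macroscopic_functional_value
    {Λ Ω : Type*} [Fintype Λ] [Fintype Ω] [DecidableEq (Λ × Ω)]
    (cA cB : Λ × Ω → ℝ) (hcA : ∀ p, 0 ≤ cA p) (hcB : ∀ p, 0 ≤ cB p)
    (SA SB : Fin 3 → Finset (Λ × Ω))
    (hSAdisj : ∀ k k', k ≠ k' → Disjoint (SA k) (SA k'))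
    (hSBdisj : ∀ k k', k ≠ k' → Disjoint (SB k) (SB k'))
    (hSAcover : ∀ p, cA p ≠ 0 → ∃ k, p ∈ SA k)
    (hSBcover : ∀ q, cB q ≠ 0 → ∃ k, q ∈ SB k)
    -- normalized observable increments for the two processes
    (dA dB : Λ × Ω → ℝ)
    (hdA0 : ∀ p ∈ SA 0, dA p = -1) (hdA1 : ∀ p ∈ SA 1, dA p = 0)
    (hdA2 : ∀ p ∈ SA 2, dA p = 1)
    (hdB0 : ∀ q ∈ SB 0, dB q = -1) (hdB1 : ∀ q ∈ SB 1, dB q = 0)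
    (hdB2 : ∀ q ∈ SB 2, dB q = 1) :
    ∑ p : Λ × Ω, ∑ q : Λ × Ω,
        (∑ k : Fin 3,
          min (∑ p' ∈ SA k, cA p') (∑ q' ∈ SB k, cB q')
            * (cA p / ∑ p' ∈ SA k, cA p') * (cB q / ∑ q' ∈ SB k, cB q')
            * (if p ∈ SA k then 1 else 0) * (if q ∈ SB k then 1 else 0))
        * dA p * dB q
      = min (∑ p' ∈ SA 0, cA p') (∑ q' ∈ SB 0, cB q')
        + min (∑ p' ∈ SA 2, cA p') (∑ q' ∈ SB 2, cB q') := by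
  classical
  set LA : Fin 3 → ℝ := fun k => ∑ p' ∈ SA k, cA p' with hLA
  set LB : Fin 3 → ℝ := fun k => ∑ q' ∈ SB k, cB q' with hLB
  have hLAnn : ∀ k, 0 ≤ LA k := fun k => Finset.sum_nonneg fun p _ => hcA p
  have hLBnn : ∀ k, 0 ≤ LB k := fun k => Finset.sum_nonneg fun q _ => hcB q
  set A : Fin 3 → (Λ × Ω) → ℝ :=
    fun k p => cA p / LA k * (if p ∈ SA k then 1 else 0) * dA p with hA
  set B : Fin 3 → (Λ × Ω) → ℝ :=
    fun k q => cB q / LB k * (if q ∈ SB k then 1 else 0) * dB q with hB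
  have step1 : ∑ p : Λ × Ω, ∑ q : Λ × Ω,
      (∑ k : Fin 3, min (LA k) (LB k) * (cA p / LA k) * (cB q / LB k)
        * (if p ∈ SA k then 1 else 0) * (if q ∈ SB k then 1 else 0))
      * dA p * dB q
      = ∑ k : Fin 3, min (LA k) (LB k) * (∑ p : Λ × Ω, A k p)
          * (∑ q : Λ × Ω, B k q) := by
    have : ∀ p q : Λ × Ω,
        (∑ k : Fin 3, min (LA k) (LB k) * (cA p / LA k) * (cB q / LB k)
          * (if p ∈ SA k then 1 else 0) * (if q ∈ SB k then 1 else 0))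
        * dA p * dB q
        = ∑ k : Fin 3, min (LA k) (LB k) * A k p * B k q := by
      intro p q
      rw [Finset.sum_mul, Finset.sum_mul]
      refine Finset.sum_congr rfl fun k _ => ?_
      simp only [hA, hB]; ring
    simp only [this]
    have comm1 : ∀ p : Λ × Ω,
        (∑ q : Λ × Ω, ∑ k : Fin 3, min (LA k) (LB k) * A k p * B k q)
          = ∑ k : Fin 3, ∑ q : Λ × Ω, min (LA k) (LB k) * A k p * B k q :=
      fun p => Finset.sum_comm
    simp only [comm1]
    have comm2 :
        (∑ p : Λ × Ω, ∑ k : Fin 3, ∑ q : Λ × Ω, min (LA k) (LB k) * A k p * B k q)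
          = ∑ k : Fin 3, ∑ p : Λ × Ω, ∑ q : Λ × Ω, min (LA k) (LB k) * A k p * B k q :=
      Finset.sum_comm
    rw [comm2]
    refine Finset.sum_congr rfl fun k _ => ?_
    symm
    calc ((LA k ⊓ LB k) * ∑ p : Λ × Ω, A k p) * ∑ q : Λ × Ω, B k q
        = (∑ p : Λ × Ω, (LA k ⊓ LB k) * A k p) * ∑ q : Λ × Ω, B k q := by
          rw [show (LA k ⊓ LB k) * ∑ p : Λ × Ω, A k p
              = ∑ p : Λ × Ω, (LA k ⊓ LB k) * A k p by rw [Finset.mul_sum]]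
      _ = ∑ p : Λ × Ω, ∑ q : Λ × Ω, (LA k ⊓ LB k) * A k p * B k q := by
          rw [Finset.sum_mul_sum]
  rw [step1]
  have hAval0 : ∑ p : Λ × Ω, A 0 p = if LA 0 = 0 then 0 else (-1 : ℝ) :=
    key_norm_sum cA hcA (SA 0) (-1) dA hdA0
  have hAval1 : ∑ p : Λ × Ω, A 1 p = if LA 1 = 0 then 0 else (0 : ℝ) :=
    key_norm_sum cA hcA (SA 1) 0 dA hdA1
  have hAval2 : ∑ p : Λ × Ω, A 2 p = if LA 2 = 0 then 0 else (1 : ℝ) :=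
    key_norm_sum cA hcA (SA 2) 1 dA hdA2
  have hBval0 : ∑ q : Λ × Ω, B 0 q = if LB 0 = 0 then 0 else (-1 : ℝ) :=
    key_norm_sum cB hcB (SB 0) (-1) dB hdB0
  have hBval2 : ∑ q : Λ × Ω, B 2 q = if LB 2 = 0 then 0 else (1 : ℝ) :=
    key_norm_sum cB hcB (SB 2) 1 dB hdB2
  rw [Fin.sum_univ_three, hAval0, hAval1, hAval2, hBval0, hBval2,
    min_if_fix _ _ _ _ (hLAnn 0) (hLBnn 0),
    min_if_fix _ _ _ _ (hLAnn 2) (hLBnn 2)]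
  simp
  rfl
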